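/- Let q ≥ 3 be a fixed integer, and for each integer k ≥ 2 let γ_k denote the dominant root of Φ_{q,k}, i.e. the unique real root of Φ_{q,k}(t) = t^k − q t^{k−1} − t^{k−2} − ⋯ − t − 1 in the interval (q, q+1). Then for all integers l > k ≥ 2 one has γ_l > γ_k. -/

import Mathlib

lemma aux_pow_sub_pow_le (a b : ℝ) (h1 : 1 ≤ a) (hb : 0 ≤ b) (hba : b ≤ a) (m : ℕ) :
    a ^ m - b ^ m ≤ m * a ^ m * (a - b) := by
  induction m with
  | zero => simp
  | succ n ih =>
    have h2 : b ^ n ≤ a ^ n := pow_le_pow_left₀ hb hba n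
    have h3 : (0:ℝ) ≤ b ^ n := pow_nonneg hb n
    have h4 : (1:ℝ) ≤ a ^ n := one_le_pow₀ h1
    have hd : (0:ℝ) ≤ a - b := by linarith
    have e1 : a * (a ^ n - b ^ n) ≤ a * (n * a ^ n * (a - b)) :=
      mul_le_mul_of_nonneg_left ih (by linarith)
    have e2 : (a - b) * b ^ n ≤ (a - b) * a ^ (n + 1) := by
      have : b ^ n ≤ a ^ (n + 1) := h2.trans (pow_le_pow_right₀ h1 (Nat.le_succ n))
      exact mul_le_mul_of_nonneg_left this hd
    have hn : (0:ℝ) ≤ (n:ℝ) := Nat.cast_nonneg n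
    simp only [pow_succ] at e2 ⊢
    push_cast
    nlinarith [e1, e2, mul_nonneg (mul_nonneg hn (mul_nonneg (by linarith : (0:ℝ) ≤ a ^ n) (by linarith : (0:ℝ) ≤ a))) hd]

/-- For a fixed integer `q ≥ 3`, the dominant roots of `Φ_{q,k}` are
strictly increasing in `k`: if `l > k ≥ 2`, then `γ_l > γ_k`. -/
theorem qk_dominant_root_strict_mono
    (q : ℤ) (hq : 3 ≤ q) (k l : ℕ) (hk : 2 ≤ k) (hkl : k < l)
    (γk γl : ℝ)
    (hγk_lb : (q : ℝ) < γk) (hγk_ub : γk < (q : ℝ) + 1)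
    (hγk_root : γk ^ k - (q : ℝ) * γk ^ (k - 1) - ∑ i ∈ Finset.range (k - 1), γk ^ i = 0)
    (hγl_lb : (q : ℝ) < γl) (hγl_ub : γl < (q : ℝ) + 1)
    (hγl_root : γl ^ l - (q : ℝ) * γl ^ (l - 1) - ∑ i ∈ Finset.range (l - 1), γl ^ i = 0) :
    γk < γl := by
  by_contra hcon
  push_neg at hcon
  have hq' : (3:ℝ) ≤ (q:ℝ) := by exact_mod_cast hq
  have ha1 : (3:ℝ) < γk := by linarith
  have hb1 : (3:ℝ) < γl := by linarith
  obtain ⟨m, rfl⟩ : ∃ m, k = m + 1 := ⟨k - 1, by omega⟩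
  obtain ⟨n, rfl⟩ : ∃ n, l = n + 1 := ⟨l - 1, by omega⟩
  have hm : 1 ≤ m := by omega
  have hmn : m < n := by omega
  simp only [Nat.add_sub_cancel] at hγk_root hγl_root
  -- transformed equations
  have ek : (γk - 1) * ((γk - q) * γk ^ m) = γk ^ m - 1 := by
    have hs : ∑ i ∈ Finset.range m, γk ^ i = (γk ^ m - 1) / (γk - 1) :=
      geom_sum_eq (by linarith) m
    rw [hs] at hγk_root
    have hne : γk - 1 ≠ 0 := by linarith
    field_simp [hne] at hγk_root
    linear_combination hγk_root
  have el : (γl - 1) * ((γl - q) * γl ^ n) = γl ^ n - 1 := by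
    have hs : ∑ i ∈ Finset.range n, γl ^ i = (γl ^ n - 1) / (γl - 1) :=
      geom_sum_eq (by linarith) n
    rw [hs] at hγl_root
    have hne : γl - 1 ≠ 0 := by linarith
    field_simp [hne] at hγl_root
    linear_combination hγl_root
  have hakm : (0:ℝ) < γk ^ m := by positivity
  have hblm : (0:ℝ) < γl ^ m := by positivity
  have hbln : (0:ℝ) < γl ^ n := by positivity
  -- divided form
  have Ek : (γk - 1) * (γk - q) = 1 - 1 / γk ^ m := by
    field_simp
    linear_combination ek
  have El : (γl - 1) * (γl - q) = 1 - 1 / γl ^ n := by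
    field_simp
    linear_combination el
  -- key identity
  have key : (γk - γl) * (γk + γl - q - 1) = 1 / γl ^ n - 1 / γk ^ m := by
    linear_combination Ek - El
  -- strict: 1/γl^n < 1/γl^m
  have h1 : 1 / γl ^ n < 1 / γl ^ m := by
    apply one_div_lt_one_div_of_lt hblm
    exact pow_lt_pow_right₀ (by linarith) hmn
  -- 1/γl^m - 1/γk^m ≤ γk - γl
  have hsub : γk ^ m - γl ^ m ≤ m * γk ^ m * (γk - γl) :=
    aux_pow_sub_pow_le γk γl (by linarith) (by linarith) hcon m
  have hmle : (m:ℝ) ≤ γl ^ m := by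
    calc (m:ℝ) ≤ 2 ^ m := by exact_mod_cast (Nat.lt_two_pow_self (n := m)).le
    _ ≤ γl ^ m := pow_le_pow_left₀ (by norm_num) (by linarith) m
  have h2 : 1 / γl ^ m - 1 / γk ^ m ≤ γk - γl := by
    rw [div_sub_div _ _ (ne_of_gt hblm) (ne_of_gt hakm)]
    rw [div_le_iff₀ (by positivity)]
    have : (m:ℝ) * γk ^ m * (γk - γl) ≤ (γk - γl) * (γl ^ m * γk ^ m) := by
      nlinarith [mul_nonneg (sub_nonneg.mpr hcon) hakm.le]
    nlinarith
  -- conclude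
  have hd : 0 ≤ γk - γl := sub_nonneg.mpr hcon
  nlinarith [key, h1, h2, mul_le_mul_of_nonneg_left (by linarith : (2:ℝ) ≤ γk + γl - q - 1) hd]
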